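/- Lemma 3.2 (speed of convergence of moments in the Wasserstein metric, explicit moment form). Let s > 1 be real, let k ≥ 2 be an integer, let m, ℓ ≥ 0 be integers, and let q ≥ 2 be an integer coprime to k. Then | E_{s,q}[χ(k)^m · conj(χ(k))^ℓ] − k^{-s·|m-ℓ|} | ≤ (k^{s·m} + k^{s·ℓ} + 2) · ζ(s)² / q^s, where E_{s,q}[χ(k)^m · conj(χ(k))^ℓ] = (Σ_χ |L(s,χ)|² χ(k)^m conj(χ(k))^ℓ) / (Σ_χ |L(s,χ)|²), the sums running over all Dirichlet characters χ mod q, and ζ is the Riemann zeta function. -/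

import Mathlib

open Filter MeasureTheory Complex Topology
open Function

/-- `L(s,χ) = Σ_{n ≥ 1} χ(n) n^{-s}` (the `n = 0` term vanishes since `(0:ℝ)^(-s) = 0`). -/
noncomputable def Lval (q : ℕ) (s : ℝ) (χ : DirichletCharacter ℂ q) : ℂ :=
  ∑' n : ℕ, χ (n : ZMod q) * (((n : ℝ) ^ (-s) : ℝ) : ℂ)

/-- The Riemann zeta function `ζ(s) = Σ_{n ≥ 1} n^{-s}` for real `s > 1`
(the `n = 0` term vanishes since `(0:ℝ)^(-s) = 0`). -/
noncomputable def zetaR (s : ℝ) : ℝ := ∑' n : ℕ, (n : ℝ) ^ (-s)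

namespace SCMaux

attribute [local instance] Classical.propDecidable

noncomputable def f (s : ℝ) (n : ℕ) : ℝ := (n : ℝ) ^ (-s)

lemma f_nonneg (s : ℝ) (n : ℕ) : 0 ≤ f s n := Real.rpow_nonneg (Nat.cast_nonneg n) _

lemma f_summable {s : ℝ} (hs : 1 < s) : Summable (f s) :=
  Real.summable_nat_rpow.mpr (by linarith)

lemma f_mul (s : ℝ) (a b : ℕ) : f s (a * b) = f s a * f s b := by
  unfold f; push_cast
  exact Real.mul_rpow (Nat.cast_nonneg a) (Nat.cast_nonneg b)

lemma f_one (s : ℝ) : f s 1 = 1 := by simp [f]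

lemma f_le_one {s : ℝ} (hs : 1 < s) (n : ℕ) : f s n ≤ 1 := by
  rcases Nat.eq_zero_or_pos n with rfl | hn
  · simp only [f, Nat.cast_zero]; rw [Real.zero_rpow (by linarith : -s ≠ 0)]; exact zero_le_one
  · exact Real.rpow_le_one_of_one_le_of_nonpos (by exact_mod_cast hn) (by linarith)

lemma f_anti {s : ℝ} (hs : 1 < s) {a b : ℕ} (ha : 0 < a) (hab : a ≤ b) :
    f s b ≤ f s a :=
  Real.rpow_le_rpow_of_nonpos (by exact_mod_cast ha) (by exact_mod_cast hab) (by linarith)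

lemma F_summable {s : ℝ} (hs : 1 < s) :
    Summable (fun p : ℕ × ℕ => f s p.1 * f s p.2) :=
  (f_summable hs).mul_of_nonneg (f_summable hs) (fun n => f_nonneg s n) (fun n => f_nonneg s n)

/-- The indicator-weighted summand. -/
noncomputable def g (s : ℝ) (q c d : ℕ) (p : ℕ × ℕ) : ℝ :=
  if ((p.1 * c : ℕ) : ZMod q) = ((p.2 * d : ℕ) : ZMod q) ∧ IsUnit ((p.1 * c : ℕ) : ZMod q)
  then f s p.1 * f s p.2 else 0

noncomputable def T (s : ℝ) (q c d : ℕ) : ℝ := ∑' p : ℕ × ℕ, g s q c d p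

lemma g_nonneg (s : ℝ) (q c d : ℕ) (p : ℕ × ℕ) : 0 ≤ g s q c d p := by
  unfold g; split_ifs
  · exact mul_nonneg (f_nonneg s _) (f_nonneg s _)
  · exact le_rfl
lemma g_le (s : ℝ) (q c d : ℕ) (p : ℕ × ℕ) : g s q c d p ≤ f s p.1 * f s p.2 := by
  unfold g; split_ifs
  · exact le_rfl
  · exact mul_nonneg (f_nonneg s _) (f_nonneg s _)

lemma g_summable {s : ℝ} (hs : 1 < s) (q c d : ℕ) : Summable (g s q c d) :=
  (F_summable hs).of_nonneg_of_le (g_nonneg s q c d) (g_le s q c d)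

lemma g_swap (s : ℝ) (q c d : ℕ) (p : ℕ × ℕ) : g s q c d p = g s q d c p.swap := by
  unfold g
  by_cases h : ((p.1 * c : ℕ) : ZMod q) = ((p.2 * d : ℕ) : ZMod q)
  · by_cases hu : IsUnit ((p.1 * c : ℕ) : ZMod q)
    · rw [if_pos ⟨h, hu⟩, if_pos ⟨h.symm, h ▸ hu⟩, mul_comm]; rfl
    · rw [if_neg (by tauto), if_neg (by rintro ⟨h1, h2⟩; exact hu (h1.symm ▸ h2))]
  · rw [if_neg (by tauto), if_neg (by rintro ⟨h1, _⟩; exact h h1.symm)]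

lemma T_swap (s : ℝ) (q c d : ℕ) : T s q c d = T s q d c := by
  unfold T
  rw [← (Equiv.prodComm ℕ ℕ).tsum_eq (g s q d c)]
  exact tsum_congr fun p => g_swap s q c d p

lemma orth {q : ℕ} (hq : 2 ≤ q) (u v : ZMod q) :
    ∑ χ : DirichletCharacter ℂ q, χ u * (starRingEnd ℂ) (χ v) =
      if u = v ∧ IsUnit u then (q.totient : ℂ) else 0 := by
  haveI : NeZero q := ⟨by omega⟩
  haveI : Fact (1 < q) := ⟨by omega⟩
  haveI : NeZero ((Monoid.exponent (ZMod q)ˣ : ℕ) : ℂ) :=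
    ⟨Nat.cast_ne_zero.mpr Monoid.exponent_ne_zero_of_finite⟩
  have h1 : ∀ χ : DirichletCharacter ℂ q, χ u * (starRingEnd ℂ) (χ v)
      = χ (u * Ring.inverse v) := by
    intro χ
    rw [starRingEnd_apply, MulChar.star_apply', MulChar.inv_apply, map_mul]
  rw [Finset.sum_congr rfl fun χ _ => h1 χ, DirichletCharacter.sum_characters_eq]
  congr 1
  simp only [eq_iff_iff]
  constructor
  · intro h
    have hu : IsUnit u := IsUnit.of_mul_eq_one _ h
    have hv' : IsUnit (Ring.inverse v) := IsUnit.of_mul_eq_one _ (by rwa [mul_comm] at h)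
    have hv : IsUnit v := by
      by_contra hnv
      rw [Ring.inverse_non_unit v hnv] at hv'
      exact hv'.ne_zero rfl
    refine ⟨?_, hu⟩
    calc u = u * (Ring.inverse v * v) := by rw [Ring.inverse_mul_cancel v hv, mul_one]
    _ = (u * Ring.inverse v) * v := by ring
    _ = v := by rw [h, one_mul]
  · rintro ⟨rfl, hu⟩
    exact Ring.mul_inverse_cancel u hu

lemma numer_eq {s : ℝ} (hs : 1 < s) {q : ℕ} (hq : 2 ≤ q) (k m ℓ : ℕ) :
    ∑ χ : DirichletCharacter ℂ q,
      ((‖Lval q s χ‖ ^ 2 : ℝ) : ℂ) * χ (k : ZMod q) ^ m *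
        (starRingEnd ℂ) (χ (k : ZMod q)) ^ ℓ
    = (((q.totient : ℝ) * T s q (k ^ m) (k ^ ℓ) : ℝ) : ℂ) := by
  have hnorm : ∀ (χ : DirichletCharacter ℂ q) (n : ℕ),
      ‖χ (n : ZMod q) * ((f s n : ℝ) : ℂ)‖ ≤ f s n := by
    intro χ n
    rw [norm_mul, Complex.norm_real, Real.norm_of_nonneg (f_nonneg s n)]
    calc ‖χ (n : ZMod q)‖ * f s n ≤ 1 * f s n :=
          mul_le_mul_of_nonneg_right (DirichletCharacter.norm_le_one χ _) (f_nonneg s n)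
      _ = f s n := one_mul _
  have hsum1 : ∀ χ : DirichletCharacter ℂ q,
      Summable (fun n : ℕ => ‖χ (n : ZMod q) * ((f s n : ℝ) : ℂ)‖) := fun χ =>
    Summable.of_nonneg_of_le (fun n => norm_nonneg _) (fun n => hnorm χ n) (f_summable hs)
  have hL : ∀ χ : DirichletCharacter ℂ q,
      Lval q s χ = ∑' n : ℕ, χ (n : ZMod q) * ((f s n : ℝ) : ℂ) := fun χ => rfl
  have hconj : ∀ χ : DirichletCharacter ℂ q, (starRingEnd ℂ) (Lval q s χ)
      = ∑' n : ℕ, (starRingEnd ℂ) (χ (n : ZMod q)) * ((f s n : ℝ) : ℂ) := by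
    intro χ
    rw [hL χ, starRingEnd_apply, tsum_star]
    exact tsum_congr fun n => by
      rw [star_mul', ← starRingEnd_apply, ← starRingEnd_apply, Complex.conj_ofReal]
  have hsum2 : ∀ χ : DirichletCharacter ℂ q,
      Summable (fun n : ℕ => ‖(starRingEnd ℂ) (χ (n : ZMod q)) * ((f s n : ℝ) : ℂ)‖) := by
    intro χ
    refine Summable.of_nonneg_of_le (fun n => norm_nonneg _) (fun n => ?_) (f_summable hs)
    rw [norm_mul, RCLike.norm_conj, ← norm_mul]
    exact hnorm χ n
  have key : ∀ χ : DirichletCharacter ℂ q,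
      ((‖Lval q s χ‖ ^ 2 : ℝ) : ℂ) * χ (k : ZMod q) ^ m *
        (starRingEnd ℂ) (χ (k : ZMod q)) ^ ℓ
      = ∑' p : ℕ × ℕ, ((f s p.1 * f s p.2 : ℝ) : ℂ) *
          (χ ((p.1 * k ^ m : ℕ) : ZMod q) *
            (starRingEnd ℂ) (χ ((p.2 * k ^ ℓ : ℕ) : ZMod q))) := by
    intro χ
    have habs : ((‖Lval q s χ‖ ^ 2 : ℝ) : ℂ)
        = Lval q s χ * (starRingEnd ℂ) (Lval q s χ) := by
      rw [Complex.sq_norm]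
      exact (Complex.mul_conj _).symm
    rw [habs, hconj χ, hL χ,
      tsum_mul_tsum_of_summable_norm (hsum1 χ) (hsum2 χ), ← tsum_mul_right, ← tsum_mul_right]
    refine tsum_congr fun p => ?_
    have e1 : χ ((p.1 * k ^ m : ℕ) : ZMod q)
        = χ ((p.1 : ℕ) : ZMod q) * χ ((k : ℕ) : ZMod q) ^ m := by
      push_cast
      rw [map_mul, map_pow]
    have e2 : (starRingEnd ℂ) (χ ((p.2 * k ^ ℓ : ℕ) : ZMod q))
        = (starRingEnd ℂ) (χ ((p.2 : ℕ) : ZMod q)) *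
            (starRingEnd ℂ) (χ ((k : ℕ) : ZMod q)) ^ ℓ := by
      push_cast
      rw [map_mul, map_pow, map_mul, map_pow]
    rw [e1, e2, Complex.ofReal_mul]
    ring
  rw [Finset.sum_congr rfl fun χ _ => key χ]
  have hsummand : ∀ χ : DirichletCharacter ℂ q,
      Summable (fun p : ℕ × ℕ => ((f s p.1 * f s p.2 : ℝ) : ℂ) *
        (χ ((p.1 * k ^ m : ℕ) : ZMod q) *
          (starRingEnd ℂ) (χ ((p.2 * k ^ ℓ : ℕ) : ZMod q)))) := by
    intro χ
    apply Summable.of_norm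
    refine Summable.of_nonneg_of_le (fun p => norm_nonneg _) (fun p => ?_) (F_summable hs)
    rw [norm_mul, Complex.norm_real,
      Real.norm_of_nonneg (mul_nonneg (f_nonneg s _) (f_nonneg s _))]
    have hb : ‖χ ((p.1 * k ^ m : ℕ) : ZMod q) *
        (starRingEnd ℂ) (χ ((p.2 * k ^ ℓ : ℕ) : ZMod q))‖ ≤ 1 := by
      rw [norm_mul, RCLike.norm_conj]
      exact mul_le_one₀ (DirichletCharacter.norm_le_one χ _) (norm_nonneg _)
        (DirichletCharacter.norm_le_one χ _)
    calc (f s p.1 * f s p.2) * ‖_‖ ≤ (f s p.1 * f s p.2) * 1 :=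
          mul_le_mul_of_nonneg_left hb (mul_nonneg (f_nonneg s _) (f_nonneg s _))
      _ = f s p.1 * f s p.2 := mul_one _
  rw [← Summable.tsum_finsetSum (fun χ _ => hsummand χ)]
  have inner : ∀ p : ℕ × ℕ,
      ∑ χ : DirichletCharacter ℂ q, ((f s p.1 * f s p.2 : ℝ) : ℂ) *
        (χ ((p.1 * k ^ m : ℕ) : ZMod q) *
          (starRingEnd ℂ) (χ ((p.2 * k ^ ℓ : ℕ) : ZMod q)))
      = (((q.totient : ℝ) * g s q (k ^ m) (k ^ ℓ) p : ℝ) : ℂ) := by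
    intro p
    rw [← Finset.mul_sum, orth hq]
    unfold g
    split_ifs with h
    · push_cast
      ring
    · simp
  rw [tsum_congr inner, ← Complex.ofReal_tsum, tsum_mul_left]
  rfl

/-- diagonal part -/
noncomputable def gd (s : ℝ) (q c d : ℕ) (p : ℕ × ℕ) : ℝ :=
  if p.1 * c = p.2 * d then g s q c d p else 0

/-- off-diagonal part -/
noncomputable def go (s : ℝ) (q c d : ℕ) (p : ℕ × ℕ) : ℝ :=
  if p.1 * c = p.2 * d then 0 else g s q c d p

lemma gd_nonneg (s : ℝ) (q c d : ℕ) (p : ℕ × ℕ) : 0 ≤ gd s q c d p := by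
  unfold gd; split_ifs; exacts [g_nonneg s q c d p, le_rfl]

lemma go_nonneg (s : ℝ) (q c d : ℕ) (p : ℕ × ℕ) : 0 ≤ go s q c d p := by
  unfold go; split_ifs; exacts [le_rfl, g_nonneg s q c d p]

lemma gd_le (s : ℝ) (q c d : ℕ) (p : ℕ × ℕ) : gd s q c d p ≤ g s q c d p := by
  unfold gd; split_ifs; exacts [le_rfl, g_nonneg s q c d p]

lemma go_le (s : ℝ) (q c d : ℕ) (p : ℕ × ℕ) : go s q c d p ≤ g s q c d p := by
  unfold go; split_ifs; exacts [g_nonneg s q c d p, le_rfl]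

lemma gd_summable {s : ℝ} (hs : 1 < s) (q c d : ℕ) : Summable (gd s q c d) :=
  (g_summable hs q c d).of_nonneg_of_le (gd_nonneg s q c d) (gd_le s q c d)

lemma go_summable {s : ℝ} (hs : 1 < s) (q c d : ℕ) : Summable (go s q c d) :=
  (g_summable hs q c d).of_nonneg_of_le (go_nonneg s q c d) (go_le s q c d)

lemma T_split {s : ℝ} (hs : 1 < s) (q c d : ℕ) :
    T s q c d = (∑' p : ℕ × ℕ, gd s q c d p) + ∑' p : ℕ × ℕ, go s q c d p := by
  rw [T, ← Summable.tsum_add (gd_summable hs q c d) (go_summable hs q c d)]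
  refine tsum_congr fun p => ?_
  unfold gd go
  split_ifs with h
  · rw [add_zero]
  · rw [zero_add]

noncomputable def S (s : ℝ) (q : ℕ) : ℝ :=
  ∑' a : ℕ, if IsUnit ((a : ZMod q)) then f s a * f s a else 0

lemma S_summable {s : ℝ} (hs : 1 < s) (q : ℕ) :
    Summable (fun a : ℕ => if IsUnit ((a : ZMod q)) then f s a * f s a else 0) := by
  refine (f_summable hs).of_nonneg_of_le (fun a => ?_) (fun a => ?_)
  · split_ifs
    exacts [mul_nonneg (f_nonneg s a) (f_nonneg s a), le_rfl]
  · split_ifs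
    · calc f s a * f s a ≤ 1 * f s a :=
            mul_le_mul_of_nonneg_right (f_le_one hs a) (f_nonneg s a)
        _ = f s a := one_mul _
    · exact f_nonneg s a

lemma S_ge_one {s : ℝ} (hs : 1 < s) (q : ℕ) : 1 ≤ S s q := by
  have h := Summable.le_tsum (S_summable hs q) 1 (fun b _ => by
    split_ifs
    exacts [mul_nonneg (f_nonneg s b) (f_nonneg s b), le_rfl])
  simpa [S, isUnit_one, f_one] using h

lemma diag_eq {s : ℝ} (hs : 1 < s) (q : ℕ) (e d : ℕ) (hd : 0 < d)
    (he : IsUnit ((e : ZMod q))) (hdu : IsUnit ((d : ZMod q))) :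
    ∑' p : ℕ × ℕ, gd s q (e * d) d p = f s e * S s q := by
  have hval : ∀ a : ℕ, gd s q (e * d) d (a, a * e)
      = f s e * (if IsUnit ((a : ZMod q)) then f s a * f s a else 0) := by
    intro a
    have hnat : a * (e * d) = (a * e) * d := by ring
    have hcast : ((a * (e * d) : ℕ) : ZMod q)
        = (a : ZMod q) * ((e : ZMod q) * (d : ZMod q)) := by push_cast; ring
    unfold gd g
    by_cases hu : IsUnit ((a : ZMod q))
    · rw [if_pos hnat, if_pos ⟨by rw [hnat], by rw [hcast]; exact hu.mul (he.mul hdu)⟩]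
      simp only
      rw [f_mul]
      rw [if_pos hu]
      ring
    · rw [if_pos hnat, if_neg, if_neg hu, mul_zero]
      rintro ⟨-, hu2⟩
      rw [hcast] at hu2
      exact hu (isUnit_of_mul_isUnit_left hu2)
  have hinj : Function.Injective (fun a : ℕ => ((a, a * e) : ℕ × ℕ)) := by
    intro a b h
    exact (Prod.ext_iff.mp h).1
  have hsupp : Function.support (gd s q (e * d) d)
      ⊆ Set.range (fun a : ℕ => ((a, a * e) : ℕ × ℕ)) := by
    rintro ⟨a, b⟩ hp
    have h1 : a * (e * d) = b * d := by
      by_contra hne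
      exact hp (if_neg hne)
    have h2 : (a * e) * d = b * d := by rw [← h1]; ring
    have h3 : b = a * e := (Nat.eq_of_mul_eq_mul_right hd h2).symm
    exact ⟨a, by rw [h3]⟩
  rw [← hinj.tsum_eq hsupp, tsum_congr hval, tsum_mul_left]
  rfl

lemma T11_ge_one {s : ℝ} (hs : 1 < s) {q : ℕ} (hq : 2 ≤ q) : 1 ≤ T s q 1 1 := by
  haveI : NeZero q := ⟨by omega⟩
  have h := T_split hs q 1 1
  have hd := diag_eq hs q 1 1 one_pos (by simpa using isUnit_one) (by simpa using isUnit_one)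
  rw [one_mul] at hd
  rw [h, hd, f_one, one_mul]
  have := S_ge_one hs q
  have hoff : 0 ≤ ∑' p : ℕ × ℕ, go s q 1 1 p := tsum_nonneg (go_nonneg s q 1 1)
  linarith

lemma fq_summable {s : ℝ} (hs : 1 < s) (q : ℕ) : Summable (fun j : ℕ => f s (j * q)) := by
  have : (fun j : ℕ => f s (j * q)) = fun j : ℕ => f s j * f s q := by
    funext j; exact f_mul s j q
  rw [this]
  exact (f_summable hs).mul_right _

lemma fq_tsum {s : ℝ} (hs : 1 < s) (q : ℕ) :
    ∑' j : ℕ, f s (j * q) = zetaR s * (q : ℝ) ^ (-s) := by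
  rw [tsum_congr (fun j => f_mul s j q), tsum_mul_right]
  rfl

lemma zetaR_nonneg (s : ℝ) : 0 ≤ zetaR s :=
  tsum_nonneg fun n => Real.rpow_nonneg (Nat.cast_nonneg n) _

/-- One-sided off-diagonal bound. -/
lemma off_one_bound {s : ℝ} (hs : 1 < s) {q : ℕ} (hq : 2 ≤ q) {c d : ℕ}
    (hc : 0 < c) :
    ∑' p : ℕ × ℕ, (if p.2 * d < p.1 * c then go s q c d p else 0)
      ≤ (c : ℝ) ^ s * (zetaR s * (zetaR s * (q : ℝ) ^ (-s))) := by
  set g1 : ℕ × ℕ → ℝ := fun p => if p.2 * d < p.1 * c then go s q c d p else 0 with hg1def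
  have hg1nonneg : ∀ p, 0 ≤ g1 p := by
    intro p; rw [hg1def]; dsimp only; split_ifs
    exacts [go_nonneg s q c d p, le_rfl]
  have hg1le : ∀ p, g1 p ≤ go s q c d p := by
    intro p; rw [hg1def]; dsimp only; split_ifs
    exacts [le_rfl, go_nonneg s q c d p]
  have hg1sum : Summable g1 :=
    (go_summable hs q c d).of_nonneg_of_le hg1nonneg hg1le
  set H : ℕ × ℕ → ℝ := fun x => (c : ℝ) ^ s * (f s x.1 * f s (x.2 * q)) with hHdef
  have hHnonneg : ∀ x, 0 ≤ H x := fun x =>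
    mul_nonneg (Real.rpow_nonneg (Nat.cast_nonneg c) s)
      (mul_nonneg (f_nonneg s _) (f_nonneg s _))
  have hprodsum : Summable (fun x : ℕ × ℕ => f s x.1 * f s (x.2 * q)) :=
    (f_summable hs).mul_of_nonneg (fq_summable hs q) (fun n => f_nonneg s n)
      (fun j => f_nonneg s _)
  have hHsum : Summable H := hprodsum.mul_left _
  -- facts about the support of g1
  have key : ∀ a b : ℕ, g1 (a, b) ≠ 0 →
      b * d < a * c ∧ a * c = b * d + q * ((a * c - b * d) / q)
        ∧ 1 ≤ (a * c - b * d) / q := by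
    intro a b hne
    have hlt : b * d < a * c := by
      by_contra h
      exact hne (if_neg h)
    have hgo : go s q c d (a, b) ≠ 0 := by
      rw [hg1def] at hne; dsimp only at hne; rwa [if_pos hlt] at hne
    have hcond : ((a * c : ℕ) : ZMod q) = ((b * d : ℕ) : ZMod q) := by
      by_contra h
      apply hgo
      unfold go g
      dsimp only
      rw [if_neg (by omega : ¬ a * c = b * d), if_neg (by tauto)]
    have hmod : b * d ≡ a * c [MOD q] :=
      ((ZMod.natCast_eq_natCast_iff _ _ _).mp hcond).symm
    have hdvd : q ∣ a * c - b * d := (Nat.modEq_iff_dvd' hlt.le).mp hmod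
    obtain ⟨j, hj⟩ := hdvd
    have hq0 : 0 < q := by omega
    have hjq : (a * c - b * d) / q = j := by
      rw [hj]; exact Nat.mul_div_cancel_left j hq0
    have hjpos : 0 < j := by
      rcases Nat.eq_zero_or_pos j with rfl | h
      · omega
      · exact h
    rw [hjq]
    exact ⟨hlt, by omega, hjpos⟩
  rw [← tsum_subtype_eq_of_support_subset (Set.Subset.refl (Function.support g1))]
  set e : Function.support g1 → ℕ × ℕ :=
    fun x => (x.1.2, (x.1.1 * c - x.1.2 * d) / q) with hedef
  have hinj : Function.Injective e := by
    rintro ⟨⟨a, b⟩, ha⟩ ⟨⟨a', b'⟩, hb⟩ hEq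
    obtain ⟨hlt1, heq1, -⟩ := key a b ha
    obtain ⟨hlt2, heq2, -⟩ := key a' b' hb
    rw [hedef] at hEq
    simp only [Prod.mk.injEq] at hEq
    obtain ⟨hb12, hj12⟩ := hEq
    subst hb12
    have hac : a * c = a' * c := by rw [heq1, heq2, hj12]
    exact Subtype.ext (Prod.ext (Nat.eq_of_mul_eq_mul_right hc hac) rfl)
  have hle : ∀ x : Function.support g1, g1 x ≤ H (e x) := by
    rintro ⟨⟨a, b⟩, ha⟩
    obtain ⟨hlt, heq, hj1⟩ := key a b ha
    have hgoal : g1 (a, b) ≤ H (b, (a * c - b * d) / q) := by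
      generalize hJ : (a * c - b * d) / q = j at heq hj1
      have hq0 : 0 < q := by omega
      have hjq : 0 < j * q := Nat.mul_pos hj1 hq0
      have hjle : j * q ≤ a * c := by
        rw [Nat.mul_comm]
        omega
      have h1 : f s (a * c) ≤ f s (j * q) := f_anti hs hjq hjle
      have h2 : f s a = (c : ℝ) ^ s * f s (a * c) := by
        rw [f_mul]
        have hcpos : (0 : ℝ) < (c : ℝ) := by exact_mod_cast hc
        have hone : (c : ℝ) ^ s * f s c = 1 := by
          show (c : ℝ) ^ s * (c : ℝ) ^ (-s) = 1
          rw [← Real.rpow_add hcpos, add_neg_cancel, Real.rpow_zero]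
        calc f s a = f s a * ((c : ℝ) ^ s * f s c) := by rw [hone, mul_one]
          _ = (c : ℝ) ^ s * (f s a * f s c) := by ring
      have hfa : f s a ≤ (c : ℝ) ^ s * f s (j * q) := by
        rw [h2]
        exact mul_le_mul_of_nonneg_left h1 (Real.rpow_nonneg (Nat.cast_nonneg c) s)
      have hval : g1 (a, b) ≤ f s a * f s b := le_trans (hg1le (a, b))
        (le_trans (go_le s q c d (a, b)) (g_le s q c d (a, b)))
      calc g1 (a, b) ≤ f s a * f s b := hval
        _ ≤ ((c : ℝ) ^ s * f s (j * q)) * f s b :=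
            mul_le_mul_of_nonneg_right hfa (f_nonneg s b)
        _ = H (b, j) := by rw [hHdef]; dsimp only; ring
    exact hgoal
  calc ∑' x : Function.support g1, g1 x ≤ ∑' x : ℕ × ℕ, H x :=
        Summable.tsum_le_tsum_of_inj e hinj (fun x _ => hHnonneg x) hle
          (hg1sum.subtype _) hHsum
    _ = (c : ℝ) ^ s * (zetaR s * (zetaR s * (q : ℝ) ^ (-s))) := by
        rw [hHdef]
        dsimp only
        rw [tsum_mul_left]
        congr 1
        have hn1 : Summable fun a : ℕ => ‖f s a‖ := (f_summable hs).abs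
        have hn2 : Summable fun j : ℕ => ‖f s (j * q)‖ := (fq_summable hs q).abs
        rw [← tsum_mul_tsum_of_summable_norm hn1 hn2, fq_tsum hs q]
        rfl

lemma off_bound {s : ℝ} (hs : 1 < s) {q : ℕ} (hq : 2 ≤ q) {c d : ℕ}
    (hc : 0 < c) (hd : 0 < d) :
    ∑' p : ℕ × ℕ, go s q c d p
      ≤ ((c : ℝ) ^ s + (d : ℝ) ^ s) * (zetaR s * (zetaR s * (q : ℝ) ^ (-s))) := by
  set g1 : ℕ × ℕ → ℝ := fun p => if p.2 * d < p.1 * c then go s q c d p else 0 with hg1def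
  set g2 : ℕ × ℕ → ℝ := fun p => if p.1 * c < p.2 * d then go s q c d p else 0 with hg2def
  have hsplit : ∀ p : ℕ × ℕ, go s q c d p = g1 p + g2 p := by
    rintro ⟨a, b⟩
    rw [hg1def, hg2def]
    dsimp only
    rcases lt_trichotomy (a * c) (b * d) with h | h | h
    · rw [if_neg (by omega), if_pos h, zero_add]
    · have : go s q c d (a, b) = 0 := if_pos h
      rw [this, if_neg (by omega), if_neg (by omega), add_zero]
    · rw [if_pos h, if_neg (by omega), add_zero]
  have hg1nonneg : ∀ p, 0 ≤ g1 p := by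
    intro p; rw [hg1def]; dsimp only; split_ifs
    exacts [go_nonneg s q c d p, le_rfl]
  have hg2nonneg : ∀ p, 0 ≤ g2 p := by
    intro p; rw [hg2def]; dsimp only; split_ifs
    exacts [go_nonneg s q c d p, le_rfl]
  have hg1le : ∀ p, g1 p ≤ go s q c d p := by
    intro p; rw [hg1def]; dsimp only; split_ifs
    exacts [le_rfl, go_nonneg s q c d p]
  have hg2le : ∀ p, g2 p ≤ go s q c d p := by
    intro p; rw [hg2def]; dsimp only; split_ifs
    exacts [le_rfl, go_nonneg s q c d p]
  have hg1sum : Summable g1 := (go_summable hs q c d).of_nonneg_of_le hg1nonneg hg1le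
  have hg2sum : Summable g2 := (go_summable hs q c d).of_nonneg_of_le hg2nonneg hg2le
  have hswap : ∀ p : ℕ × ℕ, g2 p =
      (fun p : ℕ × ℕ => if p.2 * c < p.1 * d then go s q d c p else 0) p.swap := by
    rintro ⟨a, b⟩
    rw [hg2def]
    dsimp only [Prod.swap]
    have : go s q c d (a, b) = go s q d c (b, a) := by
      unfold go
      by_cases h : a * c = b * d
      · rw [if_pos h, if_pos h.symm]
      · rw [if_neg h, if_neg (fun hh => h hh.symm), g_swap]
        rfl
    rw [this]
  have hg2tsum : ∑' p : ℕ × ℕ, g2 p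
      = ∑' p : ℕ × ℕ, (if p.2 * c < p.1 * d then go s q d c p else 0) := by
    rw [tsum_congr hswap,
      ← (Equiv.prodComm ℕ ℕ).tsum_eq (fun p : ℕ × ℕ =>
        if p.2 * c < p.1 * d then go s q d c p else 0)]
    exact tsum_congr fun p => rfl
  rw [tsum_congr hsplit, Summable.tsum_add hg1sum hg2sum, hg2tsum]
  have h1 := off_one_bound hs hq (d := d) hc
  have h2 := off_one_bound hs hq (d := c) hd
  rw [add_mul]
  exact add_le_add h1 h2

lemma f_pow (s : ℝ) (k Δ : ℕ) : f s (k ^ Δ) = (k : ℝ) ^ (-(s * (Δ : ℝ))) := by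
  unfold f
  push_cast
  rw [← Real.rpow_natCast (k : ℝ) Δ, ← Real.rpow_mul (Nat.cast_nonneg k)]
  congr 1
  ring

lemma cast_pow_rpow (s : ℝ) (k m : ℕ) : ((k ^ m : ℕ) : ℝ) ^ s = (k : ℝ) ^ (s * (m : ℝ)) := by
  push_cast
  rw [← Real.rpow_natCast (k : ℝ) m, ← Real.rpow_mul (Nat.cast_nonneg k)]
  congr 1
  ring

lemma main_est {s : ℝ} (hs : 1 < s) {q : ℕ} (hq : 2 ≤ q) {k : ℕ} (hk : 0 < k)
    (hcop : Nat.Coprime q k) {m ℓ : ℕ} (hml : ℓ ≤ m) :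
    |T s q (k ^ m) (k ^ ℓ) - f s (k ^ (m - ℓ)) * T s q 1 1|
      ≤ (((k ^ m : ℕ) : ℝ) ^ s + ((k ^ ℓ : ℕ) : ℝ) ^ s + 2)
          * (zetaR s * (zetaR s * (q : ℝ) ^ (-s))) := by
  haveI : NeZero q := ⟨by omega⟩
  have hunit : ∀ j : ℕ, IsUnit (((k ^ j : ℕ) : ZMod q)) := fun j =>
    (ZMod.isUnit_iff_coprime _ _).mpr (Nat.Coprime.pow_left j hcop.symm)
  have h1u : IsUnit (((1 : ℕ) : ZMod q)) := by rw [Nat.cast_one]; exact isUnit_one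
  have hcd : k ^ m = k ^ (m - ℓ) * k ^ ℓ := by rw [← pow_add]; congr 1; omega
  set Oc := ∑' p : ℕ × ℕ, go s q (k ^ m) (k ^ ℓ) p with hOc
  set O1 := ∑' p : ℕ × ℕ, go s q 1 1 p with hO1
  have hsplit1 : T s q (k ^ m) (k ^ ℓ) = f s (k ^ (m - ℓ)) * S s q + Oc := by
    rw [T_split hs]
    congr 1
    calc ∑' p : ℕ × ℕ, gd s q (k ^ m) (k ^ ℓ) p
        = ∑' p : ℕ × ℕ, gd s q (k ^ (m - ℓ) * k ^ ℓ) (k ^ ℓ) p := by rw [← hcd]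
      _ = f s (k ^ (m - ℓ)) * S s q :=
          diag_eq hs q _ _ (pow_pos hk ℓ) (hunit _) (hunit _)
  have hsplit2 : T s q 1 1 = S s q + O1 := by
    rw [T_split hs]
    congr 1
    calc ∑' p : ℕ × ℕ, gd s q 1 1 p = ∑' p : ℕ × ℕ, gd s q (1 * 1) 1 p := by norm_num
      _ = f s 1 * S s q := diag_eq hs q 1 1 one_pos h1u h1u
      _ = S s q := by rw [f_one, one_mul]
  have hOc_bound : Oc ≤ (((k ^ m : ℕ) : ℝ) ^ s + ((k ^ ℓ : ℕ) : ℝ) ^ s)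
      * (zetaR s * (zetaR s * (q : ℝ) ^ (-s))) :=
    off_bound hs hq (pow_pos hk m) (pow_pos hk ℓ)
  have hO1_bound : O1 ≤ 2 * (zetaR s * (zetaR s * (q : ℝ) ^ (-s))) := by
    have h := off_bound hs hq (q := q) (c := 1) (d := 1) one_pos one_pos
    rw [Nat.cast_one, Real.one_rpow] at h
    norm_num at h
    exact h
  have hOc0 : 0 ≤ Oc := tsum_nonneg (go_nonneg _ _ _ _)
  have hO10 : 0 ≤ O1 := tsum_nonneg (go_nonneg _ _ _ _)
  have hfe0 : 0 ≤ f s (k ^ (m - ℓ)) := f_nonneg _ _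
  have hfe1 : f s (k ^ (m - ℓ)) ≤ 1 := f_le_one hs _
  have hB0 : 0 ≤ zetaR s * (zetaR s * (q : ℝ) ^ (-s)) :=
    mul_nonneg (zetaR_nonneg s) (mul_nonneg (zetaR_nonneg s)
      (Real.rpow_nonneg (Nat.cast_nonneg q) _))
  have hcs0 : 0 ≤ ((k ^ m : ℕ) : ℝ) ^ s := Real.rpow_nonneg (Nat.cast_nonneg _) s
  have hds0 : 0 ≤ ((k ^ ℓ : ℕ) : ℝ) ^ s := Real.rpow_nonneg (Nat.cast_nonneg _) s
  rw [hsplit1, hsplit2]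
  have hexp : f s (k ^ (m - ℓ)) * S s q + Oc - f s (k ^ (m - ℓ)) * (S s q + O1)
      = Oc - f s (k ^ (m - ℓ)) * O1 := by ring
  rw [hexp, abs_le]
  have hfeO1 : f s (k ^ (m - ℓ)) * O1 ≤ O1 := by nlinarith
  have hprod : 0 ≤ (((k ^ m : ℕ) : ℝ) ^ s + ((k ^ ℓ : ℕ) : ℝ) ^ s)
      * (zetaR s * (zetaR s * (q : ℝ) ^ (-s))) :=
    mul_nonneg (add_nonneg hcs0 hds0) hB0
  constructor
  · nlinarith
  · nlinarith [mul_nonneg hfe0 hO10]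

end SCMaux

/-- Lemma 3.2, explicit moment form:
`|E_{s,q}[χ(k)^m conj(χ(k))^ℓ] − k^{-s|m-ℓ|}| ≤ (k^{sm} + k^{sℓ} + 2) ζ(s)² / q^s`. -/
theorem speed_of_convergence_moments (s : ℝ) (hs : 1 < s) (k : ℕ) (hk : 2 ≤ k)
    (m ℓ : ℕ) (q : ℕ) (hq : 2 ≤ q) (hcop : Nat.Coprime q k) :
    ‖((∑ χ : DirichletCharacter ℂ q,
            ((‖Lval q s χ‖ ^ 2 : ℝ) : ℂ) *
              χ (k : ZMod q) ^ m * (starRingEnd ℂ) (χ (k : ZMod q)) ^ ℓ) /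
          (∑ χ : DirichletCharacter ℂ q, ((‖Lval q s χ‖ ^ 2 : ℝ) : ℂ)) -
          (((k : ℝ) ^ (-(s * |(m : ℝ) - (ℓ : ℝ)|)) : ℝ) : ℂ))‖ ≤
      ((k : ℝ) ^ (s * m) + (k : ℝ) ^ (s * ℓ) + 2) * zetaR s ^ 2 / (q : ℝ) ^ s := by
  haveI : NeZero q := ⟨by omega⟩
  have hk0 : 0 < k := by omega
  rw [SCMaux.numer_eq hs hq k m ℓ]
  have hden : (∑ χ : DirichletCharacter ℂ q, ((‖Lval q s χ‖ ^ 2 : ℝ) : ℂ))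
      = (((q.totient : ℝ) * SCMaux.T s q 1 1 : ℝ) : ℂ) := by
    have h := SCMaux.numer_eq hs hq k 0 0
    simpa [pow_zero, mul_one] using h
  rw [hden]
  set φ : ℝ := (q.totient : ℝ) with hφdef
  set N := SCMaux.T s q (k ^ m) (k ^ ℓ) with hN
  set D := SCMaux.T s q 1 1 with hD
  set r : ℝ := (k : ℝ) ^ (-(s * |(m : ℝ) - (ℓ : ℝ)|)) with hr
  have hcast : ((φ * N : ℝ) : ℂ) / ((φ * D : ℝ) : ℂ) - ((r : ℝ) : ℂ)
      = ((φ * N / (φ * D) - r : ℝ) : ℂ) := by push_cast; ring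
  rw [hcast, Complex.norm_real, Real.norm_eq_abs]
  have hD1 : 1 ≤ D := SCMaux.T11_ge_one hs hq
  have hDpos : (0 : ℝ) < D := by linarith
  have hφpos : 0 < φ := by
    have h := Nat.totient_pos.mpr (show 0 < q by omega)
    rw [hφdef]
    exact_mod_cast h
  rw [mul_div_mul_left N D (ne_of_gt hφpos)]
  have hstep : |N / D - r| ≤ |N - r * D| := by
    have h1 : N / D - r = (N - r * D) / D := by field_simp
    rw [h1, abs_div, abs_of_pos hDpos]
    exact div_le_self (abs_nonneg _) hD1
  refine le_trans hstep ?_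
  have hBeq : ∀ A : ℝ, A * (zetaR s * (zetaR s * (q : ℝ) ^ (-s)))
      = A * zetaR s ^ 2 / (q : ℝ) ^ s := by
    intro A
    rw [Real.rpow_neg (Nat.cast_nonneg q)]
    ring
  rcases le_total ℓ m with hml | hml
  · have hr_eq : r = SCMaux.f s (k ^ (m - ℓ)) := by
      rw [hr, SCMaux.f_pow]
      congr 2
      rw [_root_.abs_of_nonneg (sub_nonneg.mpr (Nat.cast_le.mpr hml)), Nat.cast_sub hml]
    have h := SCMaux.main_est hs hq hk0 hcop hml
    rw [← hN, ← hD, ← hr_eq] at h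
    refine le_trans h ?_
    rw [hBeq, SCMaux.cast_pow_rpow, SCMaux.cast_pow_rpow]
  · have hswapT : N = SCMaux.T s q (k ^ ℓ) (k ^ m) := by rw [hN, SCMaux.T_swap]
    have hr_eq : r = SCMaux.f s (k ^ (ℓ - m)) := by
      rw [hr, SCMaux.f_pow]
      congr 2
      rw [abs_sub_comm, _root_.abs_of_nonneg (sub_nonneg.mpr (Nat.cast_le.mpr hml)),
        Nat.cast_sub hml]
    have h := SCMaux.main_est hs hq hk0 hcop hml
    rw [← hswapT, ← hD, ← hr_eq] at h
    refine le_trans h ?_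
    rw [hBeq, SCMaux.cast_pow_rpow, SCMaux.cast_pow_rpow]
    have hcomm : (k : ℝ) ^ (s * (ℓ : ℝ)) + (k : ℝ) ^ (s * (m : ℝ)) + 2
        = (k : ℝ) ^ (s * (m : ℝ)) + (k : ℝ) ^ (s * (ℓ : ℝ)) + 2 := by ring
    rw [hcomm]
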